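/- Let f₁ : ℝ^m → ℝ be convex, let B : ℝ^d → ℝ^m be linear with adjoint Bᵀ, and let λ > 0, ρ ≥ 0 satisfy λ‖Bᵀ v‖² ≤ ‖v‖² and ρ‖v‖² ≤ ‖Bᵀ v‖² for all v ∈ ℝ^m, with λρ ≤ 1. Let γ, γ' be positive reals with γ' ≤ γ, and define h : ℝ^m → ℝ by h(x) = (λ/γ) f₁((γ/λ) x). Let g₁, g₂ ∈ ℝ^d and let x_old ∈ ℝ^d, v_old, v* ∈ ℝ^m. Define w₁ = (λ/γ) B g₁ + (I − λ B Bᵀ) v_old and w₂ = (λ/γ) B g₂ + (I − λ B Bᵀ) v*, and suppose p₁ minimizes x ↦ h(x) + (1/2)‖x − w₁‖² and p₂ minimizes x ↦ h(x) + (1/2)‖x − w₂‖² over ℝ^m. Set v_new = w₁ − p₁, x_new = g₁ − γ Bᵀ v_new, and suppose moreover that v* = w₂ − p₂ and x* := g₂ − γ Bᵀ v*. Then ‖x_new − x*‖² + (γ'²/λ)‖v_new − v*‖² ≤ ‖g₁ − g₂‖² + (γ²/λ)(1 − λρ)‖v_old − v*‖². -/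

import Mathlib

open scoped RealInnerProductSpace

lemma prox_subgrad {E : Type*} [NormedAddCommGroup E] [InnerProductSpace ℝ E]
    (h : E → ℝ) (hconv : ConvexOn ℝ Set.univ h) (w p : E)
    (hmin : ∀ x, h p + (1 / 2) * ‖p - w‖ ^ 2 ≤ h x + (1 / 2) * ‖x - w‖ ^ 2) (x : E) :
    h p - h x ≤ ⟪x - p, p - w⟫ := by
  have main : ∀ t : ℝ, 0 < t → t ≤ 1 →
      h p - h x ≤ ⟪x - p, p - w⟫ + t / 2 * ‖x - p‖ ^ 2 := by
    intro t ht ht1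
    have hy := hmin ((1 - t) • p + t • x)
    have hconv' := hconv.2 (Set.mem_univ p) (Set.mem_univ x)
        (by linarith : (0:ℝ) ≤ 1 - t) ht.le (by ring)
    have hnorm : ‖(1 - t) • p + t • x - w‖ ^ 2
        = ‖p - w‖ ^ 2 + 2 * t * ⟪p - w, x - p⟫ + t ^ 2 * ‖x - p‖ ^ 2 := by
      have e : (1 - t) • p + t • x - w = (p - w) + t • (x - p) := by
        rw [smul_sub, sub_smul, one_smul]; abel
      rw [e, norm_add_sq_real, real_inner_smul_right, norm_smul]
      rw [mul_pow]
      simp [abs_of_pos ht]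
      ring
    simp only [smul_eq_mul] at hconv'
    rw [hnorm] at hy
    have key : t * (h p - h x) ≤ t * ⟪x - p, p - w⟫ + t ^ 2 / 2 * ‖x - p‖ ^ 2 := by
      have hc := real_inner_comm (p - w) (x - p)
      nlinarith [hy, hconv']
    have := mul_le_mul_of_nonneg_left key (le_of_lt (inv_pos.mpr ht))
    calc h p - h x = t⁻¹ * (t * (h p - h x)) := by field_simp
      _ ≤ t⁻¹ * (t * ⟪x - p, p - w⟫ + t ^ 2 / 2 * ‖x - p‖ ^ 2) := this
      _ = ⟪x - p, p - w⟫ + t / 2 * ‖x - p‖ ^ 2 := by field_simp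
  refine le_of_forall_pos_le_add ?_
  intro ε hε
  set C : ℝ := ‖x - p‖ ^ 2 / 2 with hC
  have hC0 : (0:ℝ) ≤ C := by positivity
  have htpos : 0 < min 1 (ε / (C + 1)) := by
    apply lt_min one_pos; positivity
  have := main _ htpos (min_le_left _ _)
  have hle : min 1 (ε / (C + 1)) / 2 * ‖x - p‖ ^ 2 ≤ ε := by
    have h1 : min 1 (ε / (C + 1)) ≤ ε / (C + 1) := min_le_right _ _
    have e2 : min 1 (ε / (C + 1)) / 2 * ‖x - p‖ ^ 2 = min 1 (ε / (C + 1)) * C := by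
      rw [hC]; ring
    rw [e2]
    calc min 1 (ε / (C + 1)) * C ≤ ε / (C + 1) * C :=
      mul_le_mul_of_nonneg_right h1 hC0
      _ ≤ ε := by
        rw [div_mul_eq_mul_div, div_le_iff₀ (by linarith)]
        nlinarith
  linarith


lemma final_ineq (lam ρ γ γ' a b c ip1 ip2 ip3 n1 n2 : ℝ)
    (hlam : 0 < lam) (hγ : 0 < γ) (hγ'pos : 0 < γ') (hγ' : γ' ≤ γ)
    (hb0 : 0 ≤ b)
    (F2 : γ * b ≤ lam * ip1 + γ * ip2 - γ * lam * ip3)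
    (B2 : lam * (n1 - 2 * ip3 + n2) ≤ b - 2 * ip2 + c)
    (C2 : ρ * c ≤ n2) :
    a - 2 * γ * ip1 + γ ^ 2 * n1 + γ' ^ 2 / lam * b ≤
      a + γ ^ 2 / lam * (1 - lam * ρ) * c := by
  rw [← mul_le_mul_iff_right₀ hlam]
  have eL : lam * (a - 2 * γ * ip1 + γ ^ 2 * n1 + γ' ^ 2 / lam * b)
      = lam * a - 2 * lam * γ * ip1 + lam * γ ^ 2 * n1 + γ' ^ 2 * b := by
    field_simp
  have eR : lam * (a + γ ^ 2 / lam * (1 - lam * ρ) * c)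
      = lam * a + γ ^ 2 * c - lam * γ ^ 2 * ρ * c := by
    field_simp; ring
  rw [eL, eR]
  have hγ'2 : γ' ^ 2 ≤ γ ^ 2 := pow_le_pow_left₀ hγ'pos.le hγ' 2
  nlinarith [mul_le_mul_of_nonneg_left F2 (by positivity : (0:ℝ) ≤ 2 * γ),
    mul_le_mul_of_nonneg_left B2 (by positivity : (0:ℝ) ≤ γ ^ 2),
    mul_le_mul_of_nonneg_left C2 (by positivity : (0:ℝ) ≤ lam * γ ^ 2),
    mul_le_mul_of_nonneg_right hγ'2 hb0]

set_option maxHeartbeats 1000000 in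
theorem stmt11 (m d : ℕ)
    (f₁ : EuclideanSpace ℝ (Fin m) → ℝ) (hf₁ : ConvexOn ℝ Set.univ f₁)
    (B : EuclideanSpace ℝ (Fin d) →L[ℝ] EuclideanSpace ℝ (Fin m))
    (lam ρ : ℝ) (hlam : 0 < lam) (hρ : 0 ≤ ρ)
    (hB1 : ∀ v : EuclideanSpace ℝ (Fin m),
      lam * ‖ContinuousLinearMap.adjoint B v‖ ^ 2 ≤ ‖v‖ ^ 2)
    (hB2 : ∀ v : EuclideanSpace ℝ (Fin m),
      ρ * ‖v‖ ^ 2 ≤ ‖ContinuousLinearMap.adjoint B v‖ ^ 2)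
    (hlamρ : lam * ρ ≤ 1)
    (γ γ' : ℝ) (hγ : 0 < γ) (hγ'pos : 0 < γ') (hγ' : γ' ≤ γ)
    (h : EuclideanSpace ℝ (Fin m) → ℝ)
    (hh : ∀ x, h x = (lam / γ) * f₁ ((γ / lam) • x))
    (g₁ g₂ x_old : EuclideanSpace ℝ (Fin d))
    (v_old vs : EuclideanSpace ℝ (Fin m))
    (w₁ w₂ : EuclideanSpace ℝ (Fin m))
    (hw₁ : w₁ = (lam / γ) • B g₁ + (v_old - lam • B (ContinuousLinearMap.adjoint B v_old)))
    (hw₂ : w₂ = (lam / γ) • B g₂ + (vs - lam • B (ContinuousLinearMap.adjoint B vs)))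
    (p₁ p₂ : EuclideanSpace ℝ (Fin m))
    (hp₁ : ∀ x, h p₁ + (1 / 2) * ‖p₁ - w₁‖ ^ 2 ≤ h x + (1 / 2) * ‖x - w₁‖ ^ 2)
    (hp₂ : ∀ x, h p₂ + (1 / 2) * ‖p₂ - w₂‖ ^ 2 ≤ h x + (1 / 2) * ‖x - w₂‖ ^ 2)
    (v_new : EuclideanSpace ℝ (Fin m)) (hv_new : v_new = w₁ - p₁)
    (x_new : EuclideanSpace ℝ (Fin d))
    (hx_new : x_new = g₁ - γ • ContinuousLinearMap.adjoint B v_new)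
    (hvs : vs = w₂ - p₂)
    (xs : EuclideanSpace ℝ (Fin d))
    (hxs : xs = g₂ - γ • ContinuousLinearMap.adjoint B vs) :
    ‖x_new - xs‖ ^ 2 + (γ' ^ 2 / lam) * ‖v_new - vs‖ ^ 2 ≤
      ‖g₁ - g₂‖ ^ 2 + (γ ^ 2 / lam) * (1 - lam * ρ) * ‖v_old - vs‖ ^ 2 := by
  set Bt := ContinuousLinearMap.adjoint B with hBt
  -- convexity of h
  have hconv : ConvexOn ℝ Set.univ h := by
    refine ⟨convex_univ, fun a _ b _ s t hs ht hst => ?_⟩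
    rw [hh, hh, hh]
    have harg : (γ / lam) • (s • a + t • b) = s • ((γ / lam) • a) + t • ((γ / lam) • b) := by
      rw [smul_add, smul_comm s, smul_comm t]
    rw [harg]
    have hc := hf₁.2 (Set.mem_univ ((γ / lam) • a)) (Set.mem_univ ((γ / lam) • b)) hs ht hst
    simp only [smul_eq_mul] at hc ⊢
    have hpos : (0:ℝ) ≤ lam / γ := by positivity
    nlinarith [mul_le_mul_of_nonneg_left hc hpos]
  -- monotonicity / firm nonexpansiveness
  have k1 := prox_subgrad h hconv w₁ p₁ hp₁ p₂
  have k2 := prox_subgrad h hconv w₂ p₂ hp₂ p₁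
  set Δv := v_new - vs with hΔv
  set Δo := v_old - vs with hΔo
  set Δg := g₁ - g₂ with hΔg
  have eΔv : Δv = (w₁ - p₁) - (w₂ - p₂) := by rw [hΔv, hv_new, hvs]
  have mono : 0 ≤ ⟪p₁ - p₂, Δv⟫ := by
    have hid : ⟪p₂ - p₁, p₁ - w₁⟫ + ⟪p₁ - p₂, p₂ - w₂⟫
        = ⟪p₁ - p₂, (w₁ - p₁) - (w₂ - p₂)⟫ := by
      simp only [inner_sub_left, inner_sub_right]
      ring
    rw [eΔv]
    linarith [k1, k2, hid.ge, hid.le]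
  have hΔw : w₁ - w₂ = Δv + (p₁ - p₂) := by rw [eΔv]; abel
  have firm : ‖Δv‖ ^ 2 ≤ ⟪Δv, w₁ - w₂⟫ := by
    rw [hΔw, inner_add_right, real_inner_self_eq_norm_sq]
    have := real_inner_comm Δv (p₁ - p₂)
    linarith
  -- expand w₁ - w₂
  have hw : w₁ - w₂ = (lam / γ) • B Δg + (Δo - lam • B (Bt Δo)) := by
    rw [hw₁, hw₂, hΔg, hΔo, hBt]
    simp only [map_sub, smul_sub]
    abel
  -- scalar atoms
  set a := ‖Δg‖ ^ 2 with ha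
  set b := ‖Δv‖ ^ 2 with hb
  set c := ‖Δo‖ ^ 2 with hc
  set ip1 := ⟪Bt Δv, Δg⟫ with hip1
  set ip2 := ⟪Δv, Δo⟫ with hip2
  set ip3 := ⟪Bt Δv, Bt Δo⟫ with hip3
  set n1 := ‖Bt Δv‖ ^ 2 with hn1
  set n2 := ‖Bt Δo‖ ^ 2 with hn2
  have hb0 : 0 ≤ b := by rw [hb]; positivity
  -- firm in scalar form
  have F1 : b ≤ (lam / γ) * ip1 + ip2 - lam * ip3 := by
    have e : ⟪Δv, w₁ - w₂⟫ = (lam / γ) * ip1 + (ip2 - lam * ip3) := by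
      rw [hw, inner_add_right, inner_sub_right, real_inner_smul_right,
        real_inner_smul_right, ← ContinuousLinearMap.adjoint_inner_left B Δg Δv,
        ← ContinuousLinearMap.adjoint_inner_left B (Bt Δo) Δv]
    rw [e] at firm; linarith
  have F2 : γ * b ≤ lam * ip1 + γ * ip2 - γ * lam * ip3 := by
    have h2 := mul_le_mul_of_nonneg_left F1 hγ.le
    have e : γ * ((lam / γ) * ip1 + ip2 - lam * ip3)
        = lam * ip1 + γ * ip2 - γ * lam * ip3 := by field_simp
    linarith [e ▸ h2]
  -- hB1 applied to Δv - Δo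
  have B2 : lam * (n1 - 2 * ip3 + n2) ≤ b - 2 * ip2 + c := by
    have hb1 := hB1 (Δv - Δo)
    have e1 : ‖Bt (Δv - Δo)‖ ^ 2 = n1 - 2 * ip3 + n2 := by
      rw [map_sub, norm_sub_sq_real, hn1, hn2, hip3]
    have e2 : ‖Δv - Δo‖ ^ 2 = b - 2 * ip2 + c := by
      rw [norm_sub_sq_real, hb, hc, hip2]
    rw [e1, e2] at hb1
    exact hb1
  have C2 : ρ * c ≤ n2 := hB2 Δo
  -- norm of x_new - xs
  have hx : x_new - xs = Δg - γ • Bt Δv := by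
    rw [hx_new, hxs, hΔg, hΔv, hBt, map_sub, smul_sub]
    abel
  have hxn : ‖x_new - xs‖ ^ 2 = a - 2 * γ * ip1 + γ ^ 2 * n1 := by
    rw [hx, norm_sub_sq_real, real_inner_smul_right, norm_smul,
      Real.norm_eq_abs, abs_of_pos hγ, mul_pow, real_inner_comm (Bt Δv) Δg]
    ring
  rw [hxn]
  exact final_ineq lam ρ γ γ' a b c ip1 ip2 ip3 n1 n2 hlam hγ hγ'pos hγ' hb0 F2 B2 C2
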